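/- Let f, g be real analytic on 𝕋 with f and v = g/f nonconstant and Z(f) = {x ∈ 𝕋 : f(x) = 0} ≠ ∅. Then there is a constant c = c(f,g) > 0 such that mes{x ∈ 𝕋 : |g(x) − E·f(x)|/√(1+E²) < ε} < ε^{c} for all E ∈ ℝ and all sufficiently small ε > 0 (uniformly in E). -/

import Mathlib

open MeasureTheory Set

/-- A set of reals with diameter ≤ d has measure ≤ d. -/
lemma vol_le_of_dist (A : Set ℝ) (d : ℝ)
    (h : ∀ x ∈ A, ∀ y ∈ A, |x - y| ≤ d) : volume A ≤ ENNReal.ofReal d := by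
  rcases A.eq_empty_or_nonempty with rfl | ⟨x₀, hx₀⟩
  · simp
  · have hbd : BddBelow A := by
      refine ⟨x₀ - d, fun y hy => ?_⟩
      have := h x₀ hx₀ y hy
      rw [abs_sub_le_iff] at this
      linarith [this.1]
    set m := sInf A with hm
    have hA : A ⊆ Icc m (m + d) := by
      intro y hy
      refine ⟨csInf_le hbd hy, ?_⟩
      have h2 : y - d ≤ m := by
        refine le_csInf ⟨x₀, hx₀⟩ (fun b hb => ?_)
        have := h y hy b hb
        rw [abs_sub_le_iff] at this
        linarith [this.1]
      linarith
    calc volume A ≤ volume (Icc m (m + d)) := measure_mono hA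
      _ = ENNReal.ofReal d := by rw [Real.volume_Icc]; ring_nf
lemma key_base (h : ℝ → ℝ) (hd : Differentiable ℝ h) (s : Set ℝ) (hs : s.OrdConnected)
    (δ ε : ℝ) (hδ : 0 < δ) (hlow : ∀ x ∈ s, δ ≤ |deriv h x|) :
    volume {x ∈ s | |h x| < ε} ≤ ENNReal.ofReal (2 * ε / δ) := by
  apply vol_le_of_dist
  have key : ∀ x ∈ {x ∈ s | |h x| < ε}, ∀ y ∈ {x ∈ s | |h x| < ε}, x < y →
      |x - y| ≤ 2 * ε / δ := by
    rintro x ⟨hxs, hxe⟩ y ⟨hys, hye⟩ hxy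
    have hyx : (0:ℝ) < y - x := by linarith
    obtain ⟨c, hc, hceq⟩ := exists_hasDerivAt_eq_slope h (deriv h) hxy
      hd.continuous.continuousOn (fun z _ => (hd z).hasDerivAt)
    have hcs : c ∈ s := hs.out hxs hys ⟨hc.1.le, hc.2.le⟩
    have h1 : δ ≤ |h y - h x| / (y - x) := by
      have := hlow c hcs
      rw [hceq] at this
      rwa [abs_div, abs_of_pos hyx] at this
    have h2 : |h y - h x| ≤ 2 * ε := by
      have e1 := abs_sub (h y) (h x)
      rw [abs_lt] at hxe hye
      have : |h x| < ε := abs_lt.mpr hxe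
      have : |h y| < ε := abs_lt.mpr hye
      linarith
    have h3 : δ * (y - x) ≤ 2 * ε := by
      have := (le_div_iff₀ hyx).mp h1
      linarith
    rw [abs_sub_comm, abs_of_pos hyx, le_div_iff₀ hδ]
    nlinarith
  intro x hx y hy
  rcases lt_trichotomy x y with hlt | heq | hgt
  · exact key x hx y hy hlt
  · have hε : 0 < ε := lt_of_le_of_lt (abs_nonneg _) hx.2
    rw [heq, sub_self, abs_zero]
    positivity
  · rw [abs_sub_comm]; exact key y hy x hx hgt
lemma sublevel_meas (h : ℝ → ℝ) (hD : ∀ m : ℕ, Differentiable ℝ (iteratedDeriv m h))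
    (k : ℕ) (hk : 1 ≤ k) :
    ∀ (s : Set ℝ), s.OrdConnected → ∀ δ ε : ℝ, 0 < δ → 0 < ε →
    (∀ x ∈ s, δ ≤ |iteratedDeriv k h x|) →
    volume {x ∈ s | |h x| < ε} ≤
      ENNReal.ofReal ((3:ℝ)^k * (ε/δ) ^ (1/(k:ℝ))) := by
  induction k, hk using Nat.le_induction with
  | base =>
    intro s hs δ ε hδ hε hlow
    simp only [iteratedDeriv_one] at hlow
    calc volume {x ∈ s | |h x| < ε} ≤ ENNReal.ofReal (2 * ε / δ) :=
        key_base h (by simpa using hD 0) s hs δ ε hδ hlow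
      _ ≤ ENNReal.ofReal ((3:ℝ)^1 * (ε/δ) ^ (1/((1:ℕ):ℝ))) := by
        apply ENNReal.ofReal_le_ofReal
        have h1 : ((1:ℕ):ℝ) = 1 := by norm_num
        have hq : 0 < ε / δ := div_pos hε hδ
        rw [h1, one_div_one, Real.rpow_one, mul_div_assoc]
        nlinarith
  | succ k hk ih =>
    intro s hs δ ε hδ hε hlow
    set g := iteratedDeriv k h with hg
    have hderiv : deriv g = iteratedDeriv (k+1) h := (iteratedDeriv_succ).symm
    have hlow' : ∀ x ∈ s, δ ≤ |deriv g x| := by intro x hx; rw [hderiv]; exact hlow x hx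
    have hgdiff : Differentiable ℝ g := hD k
    have hgcont : Continuous (deriv g) := by rw [hderiv]; exact (hD (k+1)).continuous
    rcases s.eq_empty_or_nonempty with rfl | ⟨x₀, hx₀⟩
    · simp
    set u := ε / δ with hu
    have hupos : 0 < u := div_pos hε hδ
    set t := u ^ (1/((k:ℝ)+1)) with ht
    have htpos : 0 < t := Real.rpow_pos_of_pos hupos _
    set lam := δ * t with hlam
    have hlampos : 0 < lam := mul_pos hδ htpos
    have hkR : ((k:ℝ)) ≠ 0 := Nat.cast_ne_zero.mpr (by omega)
    have hk1R : ((k:ℝ)) + 1 ≠ 0 := by positivity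
    have harith : (ε/lam) ^ (1/(k:ℝ)) = t := by
      have h2 : ε / lam = u / t := by rw [hlam, hu, ht, ← div_div]
      have h1 : u / u ^ (1/((k:ℝ)+1)) = u ^ (1 - 1/((k:ℝ)+1)) := by
        rw [Real.rpow_sub hupos, Real.rpow_one]
      rw [h2, ht, h1, ← Real.rpow_mul hupos.le]
      congr 1
      field_simp
      ring
    -- sign dichotomy
    have hsign : (∀ x ∈ s, δ ≤ deriv g x) ∨ (∀ x ∈ s, deriv g x ≤ -δ) := by
      have hzero : ∀ x ∈ s, ∀ y ∈ s, deriv g x ≤ -δ → δ ≤ deriv g y → False := by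
        intro x hx y hy h1 h2
        have hmem : (0:ℝ) ∈ uIcc (deriv g x) (deriv g y) :=
          mem_uIcc.mpr (Or.inl ⟨by linarith, by linarith⟩)
        obtain ⟨c, hc, hc0⟩ := intermediate_value_uIcc (hgcont.continuousOn) hmem
        have hcs : c ∈ s := hs.uIcc_subset hx hy hc
        have := hlow' c hcs
        rw [hc0] at this
        simp at this; linarith
      rcases le_abs.mp (hlow' x₀ hx₀) with hpos | hneg
      · left
        intro x hx
        rcases le_abs.mp (hlow' x hx) with h1 | h2
        · exact h1
        · exact absurd (hzero x hx x₀ hx₀ (by linarith) hpos) (fun a => a)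
      · right
        intro x hx
        rcases le_abs.mp (hlow' x hx) with h1 | h2
        · exact absurd (hzero x₀ hx₀ x hx (by linarith) h1) (fun a => a)
        · linarith
    have mono : MonotoneOn g s ∨ AntitoneOn g s := by
      rcases hsign with hp | hn
      · exact Or.inl ((strictMonoOn_of_deriv_pos hs.convex hgdiff.continuous.continuousOn
          (fun x hx => lt_of_lt_of_le hδ (hp x (interior_subset hx)))).monotoneOn)
      · exact Or.inr ((strictAntiOn_of_deriv_neg hs.convex hgdiff.continuous.continuousOn
          (fun x hx => lt_of_le_of_lt (hn x (interior_subset hx)) (by linarith))).antitoneOn)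
    set sp := {x ∈ s | lam ≤ g x} with hsp'
    set sm := {x ∈ s | g x ≤ -lam} with hsm'
    have hsp : sp.OrdConnected := by
      constructor
      rintro x ⟨hxs, hxg⟩ y ⟨hys, hyg⟩ z hz
      have hzs : z ∈ s := hs.out hxs hys hz
      refine ⟨hzs, ?_⟩
      rcases mono with m | m
      · exact le_trans hxg (m hxs hzs hz.1)
      · exact le_trans hyg (m hzs hys hz.2)
    have hsm : sm.OrdConnected := by
      constructor
      rintro x ⟨hxs, hxg⟩ y ⟨hys, hyg⟩ z hz
      have hzs : z ∈ s := hs.out hxs hys hz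
      refine ⟨hzs, ?_⟩
      rcases mono with m | m
      · exact le_trans (m hzs hys hz.2) hyg
      · exact le_trans (m hxs hzs hz.1) hxg
    have hcover : {x ∈ s | |h x| < ε} ⊆
        {x ∈ s | |g x| < lam} ∪ ({x ∈ sp | |h x| < ε} ∪ {x ∈ sm | |h x| < ε}) := by
      rintro x ⟨hxs, hxe⟩
      rcases lt_or_ge (|g x|) lam with hl | hr
      · exact Or.inl ⟨hxs, hl⟩
      · rcases le_abs.mp hr with h1 | h2
        · exact Or.inr (Or.inl ⟨⟨hxs, h1⟩, hxe⟩)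
        · exact Or.inr (Or.inr ⟨⟨hxs, by linarith⟩, hxe⟩)
    have hJ : volume {x ∈ s | |g x| < lam} ≤ ENNReal.ofReal (2 * lam / δ) :=
      key_base g hgdiff s hs δ lam hδ hlow'
    have hBp : volume {x ∈ sp | |h x| < ε} ≤ ENNReal.ofReal ((3:ℝ)^k * (ε/lam) ^ (1/(k:ℝ))) :=
      ih sp hsp lam ε hlampos hε (fun x hx => le_abs.mpr (Or.inl hx.2))
    have hBm : volume {x ∈ sm | |h x| < ε} ≤ ENNReal.ofReal ((3:ℝ)^k * (ε/lam) ^ (1/(k:ℝ))) :=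
      ih sm hsm lam ε hlampos hε (fun x hx => le_abs.mpr (Or.inr (by linarith [hx.2])))
    calc volume {x ∈ s | |h x| < ε}
        ≤ volume ({x ∈ s | |g x| < lam} ∪ ({x ∈ sp | |h x| < ε} ∪ {x ∈ sm | |h x| < ε})) :=
          measure_mono hcover
      _ ≤ volume {x ∈ s | |g x| < lam} + (volume {x ∈ sp | |h x| < ε}
            + volume {x ∈ sm | |h x| < ε}) :=
          le_trans (measure_union_le _ _) (by gcongr; exact measure_union_le _ _)
      _ ≤ ENNReal.ofReal (2 * lam / δ) + (ENNReal.ofReal ((3:ℝ)^k * (ε/lam) ^ (1/(k:ℝ)))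
            + ENNReal.ofReal ((3:ℝ)^k * (ε/lam) ^ (1/(k:ℝ)))) := by gcongr
      _ = ENNReal.ofReal (2 * lam / δ + ((3:ℝ)^k * (ε/lam) ^ (1/(k:ℝ))
            + (3:ℝ)^k * (ε/lam) ^ (1/(k:ℝ)))) := by
          rw [← ENNReal.ofReal_add, ← ENNReal.ofReal_add] <;> positivity
      _ ≤ ENNReal.ofReal ((3:ℝ)^(k+1) * (ε/δ) ^ (1/((k+1:ℕ):ℝ))) := by
          apply ENNReal.ofReal_le_ofReal
          rw [harith]
          have hld : 2 * lam / δ = 2 * t := by rw [hlam]; field_simp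
          have hcast : ((k+1:ℕ):ℝ) = (k:ℝ) + 1 := by push_cast; ring
          rw [hld, hcast, ← hu, ← ht]
          have h3 : (2:ℝ) ≤ 3^k := by
            calc (2:ℝ) ≤ 3^1 := by norm_num
              _ ≤ 3^k := pow_le_pow_right₀ (by norm_num) hk
          have hps : (3:ℝ)^(k+1) = 3^k * 3 := pow_succ 3 k
          nlinarith [htpos, pow_pos (show (0:ℝ) < 3 by norm_num) k]
lemma exists_iteratedDeriv_ne (h : ℝ → ℝ) (han : AnalyticOnNhd ℝ h univ)
    (hne : ∃ x, h x ≠ 0) (x₀ : ℝ) : ∃ k, iteratedDeriv k h x₀ ≠ 0 := by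
  by_contra hcon
  push_neg at hcon
  obtain ⟨p, hp⟩ := han x₀ (mem_univ _)
  obtain ⟨r, hpr⟩ := hp
  have hcoeff : ∀ n, p n (fun _ => (1:ℝ)) = 0 := by
    intro n
    have h1 := hpr.factorial_smul (1:ℝ) n
    rw [← iteratedDeriv_eq_iteratedFDeriv, hcon n] at h1
    have h2 : (n.factorial : ℝ) * p n (fun _ => (1:ℝ)) = 0 := by
      rw [← nsmul_eq_mul]; exact h1
    rcases mul_eq_zero.mp h2 with h | h
    · exact absurd h (Nat.cast_ne_zero.mpr n.factorial_ne_zero)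
    · exact h
  have hev : h =ᶠ[nhds x₀] 0 := by
    filter_upwards [EMetric.ball_mem_nhds x₀ hpr.r_pos] with y hy
    have hy' : y - x₀ ∈ Metric.eball (0:ℝ) r := by
      simpa [Metric.mem_eball, edist_dist, Real.dist_eq] using hy
    have hsum := hpr.hasSum hy'
    have hz : ∀ n, (p n fun _ => y - x₀) = 0 := by
      intro n
      have : (p n fun _ => y - x₀) = (∏ _i : Fin n, (y - x₀)) • (p n fun _ => (1:ℝ)) := by
        rw [← ContinuousMultilinearMap.map_smul_univ]
        simp
      rw [this, hcoeff n, smul_zero]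
    have : HasSum (fun n => (p n fun _ => y - x₀)) 0 := by
      simpa [hz] using (hasSum_zero : HasSum (fun _ : ℕ => (0:ℝ)) 0)
    have := HasSum.unique hsum this
    simpa using this
  obtain ⟨x, hx⟩ := hne
  exact hx (han.eqOn_zero_of_preconnected_of_eventuallyEq_zero isPreconnected_univ
    (mem_univ x₀) hev (mem_univ x))
lemma comb_analytic (f g : ℝ → ℝ) (hf : AnalyticOnNhd ℝ f univ) (hg : AnalyticOnNhd ℝ g univ)
    (a b : ℝ) : AnalyticOnNhd ℝ (fun y => a * g y + b * f y) univ :=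
  fun y hy => ((analyticAt_const.mul (hg y hy)).add (analyticAt_const.mul (hf y hy)))

lemma analytic_diff_iter (h : ℝ → ℝ) (han : AnalyticOnNhd ℝ h univ) :
    ∀ m : ℕ, Differentiable ℝ (iteratedDeriv m h) := by
  intro m
  have hc : ContDiff ℝ ((m+1 : ℕ) : ℕ∞) h := han.contDiff
  exact hc.differentiable_iteratedDeriv m (by exact_mod_cast Nat.lt_succ_self m)

lemma iter_comb (f g : ℝ → ℝ) (hf : AnalyticOnNhd ℝ f univ) (hg : AnalyticOnNhd ℝ g univ)
    (a b : ℝ) (k : ℕ) (x : ℝ) :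
    iteratedDeriv k (fun y => a * g y + b * f y) x
      = a * iteratedDeriv k g x + b * iteratedDeriv k f x := by
  have hfc : ContDiffOn ℝ (k : ℕ∞) f univ := (hf.contDiff (n := (k : ℕ∞))).contDiffOn
  have hgc : ContDiffOn ℝ (k : ℕ∞) g univ := (hg.contDiff (n := (k : ℕ∞))).contDiffOn
  have h1 : (fun y => a * g y + b * f y)
      = (fun y => a * g y) + (fun y => b * f y) := rfl
  rw [← iteratedDerivWithin_univ, h1,
    iteratedDerivWithin_add (mem_univ x) uniqueDiffOn_univ
      ((contDiffOn_const.mul hgc) x (mem_univ x)) ((contDiffOn_const.mul hfc) x (mem_univ x)),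
    iteratedDerivWithin_const_mul (mem_univ x) uniqueDiffOn_univ _ (hgc x (mem_univ x)),
    iteratedDerivWithin_const_mul (mem_univ x) uniqueDiffOn_univ _ (hfc x (mem_univ x)),
    iteratedDerivWithin_univ, iteratedDerivWithin_univ]
lemma comb_ne_zero (f g : ℝ → ℝ)
    (hfnc : ∃ x y : ℝ, f x ≠ f y)
    (hvnc : ∃ x y : ℝ, f x ≠ 0 ∧ f y ≠ 0 ∧ g x / f x ≠ g y / f y)
    (a b : ℝ) (hab : a^2 + b^2 = 1) : ∃ y, a * g y + b * f y ≠ 0 := by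
  by_contra hcon
  push_neg at hcon
  rcases eq_or_ne a 0 with rfl | ha
  · have hb : b ≠ 0 := by intro hb; rw [hb] at hab; norm_num at hab
    obtain ⟨x, y, hxy⟩ := hfnc
    have hx := hcon x
    have hy := hcon y
    apply hxy
    have : f x = 0 := by
      have : b * f x = 0 := by linarith [hx]
      exact (mul_eq_zero.mp this).resolve_left hb
    rw [this]
    have : b * f y = 0 := by linarith [hy]
    rw [(mul_eq_zero.mp this).resolve_left hb]
  · obtain ⟨x, y, hfx, hfy, hne⟩ := hvnc
    apply hne
    have hx := hcon x
    have hy := hcon y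
    have h1 : g x / f x = -b / a := by field_simp; linarith
    have h2 : g y / f y = -b / a := by field_simp; linarith
    rw [h1, h2]

lemma point_choice (f g : ℝ → ℝ)
    (hfan : AnalyticOnNhd ℝ f univ) (hgan : AnalyticOnNhd ℝ g univ)
    (hfnc : ∃ x y : ℝ, f x ≠ f y)
    (hvnc : ∃ x y : ℝ, f x ≠ 0 ∧ f y ≠ 0 ∧ g x / f x ≠ g y / f y)
    (q : (ℝ × ℝ) × ℝ) (hq : q.1.1^2 + q.1.2^2 = 1) :
    ∃ (k : ℕ) (δ r : ℝ), 0 < δ ∧ 0 < r ∧ ∀ w ∈ Metric.ball q.1 r, ∀ y ∈ Metric.ball q.2 r,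
      δ ≤ |w.1 * iteratedDeriv k g y + w.2 * iteratedDeriv k f y| := by
  obtain ⟨⟨a, b⟩, x⟩ := q
  simp only at hq ⊢
  set h : ℝ → ℝ := fun y => a * g y + b * f y with hh
  have hhan : AnalyticOnNhd ℝ h univ := comb_analytic f g hfan hgan a b
  have hne : ∃ y, h y ≠ 0 := comb_ne_zero f g hfnc hvnc a b hq
  obtain ⟨k, hk⟩ := exists_iteratedDeriv_ne h hhan hne x
  rw [iter_comb f g hfan hgan a b k x] at hk
  set v := a * iteratedDeriv k g x + b * iteratedDeriv k f x with hv
  set Φ : (ℝ × ℝ) × ℝ → ℝ :=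
    fun w => w.1.1 * iteratedDeriv k g w.2 + w.1.2 * iteratedDeriv k f w.2 with hΦ
  have hΦc : Continuous Φ := by
    have h1 : Continuous (iteratedDeriv k g) := (analytic_diff_iter g hgan k).continuous
    have h2 : Continuous (iteratedDeriv k f) := (analytic_diff_iter f hfan k).continuous
    exact ((continuous_fst.fst).mul (h1.comp continuous_snd)).add
      ((continuous_fst.snd).mul (h2.comp continuous_snd))
  have hopen : IsOpen {w | |v| / 2 < |Φ w|} := isOpen_lt continuous_const hΦc.abs
  have hqmem : ((a, b), x) ∈ {w | |v| / 2 < |Φ w|} := by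
    simp only [mem_setOf_eq, hΦ]
    have : 0 < |v| := abs_pos.mpr hk
    linarith
  obtain ⟨r, hr, hball⟩ := Metric.isOpen_iff.mp hopen _ hqmem
  refine ⟨k, |v| / 2, r, by positivity, hr, ?_⟩
  intro w hw y hy
  have hmem : ((w, y) : (ℝ × ℝ) × ℝ) ∈ Metric.ball (((a, b), x) : (ℝ × ℝ) × ℝ) r := by
    rw [Metric.mem_ball] at hw hy ⊢
    rw [Prod.dist_eq]
    simp only [max_lt_iff]
    exact ⟨hw, hy⟩
  exact (hball hmem).le
lemma final_arith (k₀ : ℕ) (hk₀ : 1 ≤ k₀) (δ₀ : ℝ) (hδ₀ : 0 < δ₀) (n : ℕ) (ε : ℝ)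
    (hε : 0 < ε)
    (hεsmall : ε < (1/((n:ℝ) * 3^k₀ * (1/δ₀) ^ (1/(k₀:ℝ)) + 1))^(2*(k₀:ℝ))) :
    (n:ℝ) * (3^k₀ * (ε/δ₀) ^ (1/(k₀:ℝ))) < ε ^ (1/(2*(k₀:ℝ))) := by
  set C : ℝ := (n:ℝ) * 3^k₀ * (1/δ₀) ^ (1/(k₀:ℝ)) with hCdef
  have hC : 0 ≤ C := by positivity
  have hk₀R : 0 < (k₀:ℝ) := by exact_mod_cast hk₀
  set c : ℝ := 1/(2*(k₀:ℝ)) with hc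
  have hcpos : 0 < c := by positivity
  set X : ℝ := ε ^ c with hX
  have hXpos : 0 < X := Real.rpow_pos_of_pos hε c
  have hsplit : (ε/δ₀) ^ (1/(k₀:ℝ)) = (1/δ₀) ^ (1/(k₀:ℝ)) * (X * X) := by
    have h1 : ε/δ₀ = ε * (1/δ₀) := by ring
    rw [h1, Real.mul_rpow hε.le (by positivity)]
    have h2 : ε ^ (1/(k₀:ℝ)) = X * X := by
      rw [hX, ← Real.rpow_add hε]
      congr 1
      rw [hc]
      field_simp
      ring
    rw [h2]; ring
  have hεc : X < 1/(C+1) := by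
    have h3 := Real.rpow_lt_rpow hε.le hεsmall hcpos
    rw [← Real.rpow_mul (by positivity : (0:ℝ) ≤ 1/(C+1))] at h3
    have h4 : 2*(k₀:ℝ) * c = 1 := by rw [hc]; field_simp
    rwa [h4, Real.rpow_one] at h3
  have h2 : C * X < 1 := by
    calc C * X ≤ C * (1/(C+1)) := mul_le_mul_of_nonneg_left hεc.le hC
      _ < 1 := by rw [mul_one_div, div_lt_one (by linarith)]; linarith
  calc (n:ℝ) * (3^k₀ * (ε/δ₀) ^ (1/(k₀:ℝ))) = C * (X * X) := by rw [hsplit, hCdef]; ring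
    _ < X := by nlinarith
    _ = ε ^ (1/(2*(k₀:ℝ))) := by rw [hX]

/-- **Uniform (in `E`) Łojasiewicz inequality for the normalized function
`(g - E·f)/√(1+E²)`.**  Let `f, g` be real analytic on `𝕋 = ℝ/ℤ` (encoded as `1`-periodic real
analytic functions on `ℝ`) with `f` and `v = g/f` nonconstant and `Z(f) ≠ ∅`.  There is
`c = c(f,g) > 0` such that `mes {x ∈ 𝕋 : |g x - E·f x|/√(1+E²) < ε} < ε ^ c` for all `E ∈ ℝ`
and all sufficiently small `ε > 0`, uniformly in `E`. -/
theorem statement6 (f g : ℝ → ℝ)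
    (hfper : Function.Periodic f 1) (hgper : Function.Periodic g 1)
    (hfan : AnalyticOnNhd ℝ f Set.univ) (hgan : AnalyticOnNhd ℝ g Set.univ)
    (hfnc : ∃ x y : ℝ, f x ≠ f y)
    (hvnc : ∃ x y : ℝ, f x ≠ 0 ∧ f y ≠ 0 ∧ g x / f x ≠ g y / f y)
    (hZ : ∃ x : ℝ, f x = 0) :
    ∃ c > (0 : ℝ), ∃ ε₁ > (0 : ℝ), ∀ E : ℝ, ∀ ε : ℝ, 0 < ε → ε < ε₁ →
      volume {x ∈ Ico (0 : ℝ) 1 | |g x - E * f x| / Real.sqrt (1 + E ^ 2) < ε} <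
        ENNReal.ofReal (ε ^ c) := by
  classical
  have hScomp : IsCompact {p : ℝ × ℝ | p.1^2 + p.2^2 = 1} := by
    apply Metric.isCompact_of_isClosed_isBounded
    · exact isClosed_eq (by fun_prop) continuous_const
    · refine (Metric.isBounded_closedBall (x := ((0,0) : ℝ × ℝ)) (r := 1)).subset ?_
      intro p hp
      simp only [mem_setOf_eq] at hp
      have h1 : |p.1| ≤ 1 := by nlinarith [sq_abs p.1, sq_nonneg p.2, abs_nonneg p.1]
      have h2 : |p.2| ≤ 1 := by nlinarith [sq_abs p.2, sq_nonneg p.1, abs_nonneg p.2]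
      simp only [Metric.mem_closedBall, Prod.dist_eq, Real.dist_eq, sub_zero]
      exact max_le h1 h2
  set K : Set ((ℝ × ℝ) × ℝ) := {p : ℝ × ℝ | p.1^2 + p.2^2 = 1} ×ˢ Icc (0:ℝ) 1 with hK
  have hKcomp : IsCompact K := hScomp.prod isCompact_Icc
  have hch : ∀ q : (ℝ × ℝ) × ℝ, q ∈ K → ∃ (k : ℕ) (δ r : ℝ), 0 < δ ∧ 0 < r ∧
      ∀ w ∈ Metric.ball q.1 r, ∀ y ∈ Metric.ball q.2 r,
        δ ≤ |w.1 * iteratedDeriv k g y + w.2 * iteratedDeriv k f y| :=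
    fun q hq => point_choice f g hfan hgan hfnc hvnc q (mem_prod.mp hq).1
  choose! kk dd rr hdd hrr hball using hch
  obtain ⟨t, htK, htcov⟩ := hKcomp.elim_nhds_subcover
    (fun q => Metric.ball q.1 (rr q) ×ˢ Metric.ball q.2 (rr q))
    (fun q hq => (Metric.isOpen_ball.prod Metric.isOpen_ball).mem_nhds
      (mem_prod.mpr ⟨Metric.mem_ball_self (hrr q hq), Metric.mem_ball_self (hrr q hq)⟩))
  have ht_ne : t.Nonempty := by
    have hq1 : ((((1:ℝ),(0:ℝ)),(0:ℝ)) : (ℝ × ℝ) × ℝ) ∈ K := by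
      refine mem_prod.mpr ⟨?_, ?_⟩
      · show (1:ℝ)^2 + (0:ℝ)^2 = 1; norm_num
      · exact ⟨le_refl 0, zero_le_one⟩
    have h2 := htcov hq1
    rw [mem_iUnion₂] at h2
    obtain ⟨p, hp, _⟩ := h2
    exact ⟨p, hp⟩
  set k₀ : ℕ := t.sup kk + 1 with hk₀def
  have hk₀ : 1 ≤ k₀ := Nat.le_add_left 1 _
  set δ₀ : ℝ := t.inf' ht_ne dd with hδ₀def
  have hδ₀ : 0 < δ₀ := (Finset.lt_inf'_iff ht_ne).mpr (fun p hp => hdd p (htK p hp))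
  set C : ℝ := (t.card : ℝ) * 3^k₀ * (1/δ₀) ^ (1/(k₀:ℝ)) with hCdef
  have hC : 0 ≤ C := by positivity
  refine ⟨1/(2*(k₀:ℝ)), by positivity, min δ₀ ((1/(C+1))^(2*(k₀:ℝ))),
    lt_min hδ₀ (by positivity), ?_⟩
  intro E ε hε hε₁
  have hεδ₀ : ε < δ₀ := lt_of_lt_of_le hε₁ (min_le_left _ _)
  have hεsmall : ε < (1/(C+1))^(2*(k₀:ℝ)) := lt_of_lt_of_le hε₁ (min_le_right _ _)
  set w : ℝ := Real.sqrt (1 + E^2) with hwdef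
  have hwpos : 0 < w := Real.sqrt_pos.mpr (by positivity)
  have hw2 : w^2 = 1 + E^2 := Real.sq_sqrt (by positivity)
  set a : ℝ := 1/w with ha
  set b : ℝ := -E/w with hb
  have hab : a^2 + b^2 = 1 := by
    rw [ha, hb]
    field_simp
    linarith [hw2]
  set h : ℝ → ℝ := fun y => a * g y + b * f y with hh
  have hhan : AnalyticOnNhd ℝ h univ := comb_analytic f g hfan hgan a b
  have hDh : ∀ m, Differentiable ℝ (iteratedDeriv m h) := analytic_diff_iter h hhan
  have hEq : ∀ y, |g y - E * f y| / w = |h y| := by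
    intro y
    have h1 : h y = (g y - E * f y)/w := by rw [hh]; simp only; rw [ha, hb]; field_simp; ring
    rw [h1, abs_div, abs_of_pos hwpos]
  set A : Set ℝ := {x ∈ Ico (0:ℝ) 1 | |h x| < ε} with hA
  have hAeq : {x ∈ Ico (0:ℝ) 1 | |g x - E * f x| / w < ε} = A := by
    ext x
    simp only [hA, mem_setOf_eq, hEq x]
  rw [hAeq]
  set T : ((ℝ × ℝ) × ℝ) → Set ℝ := fun p =>
    {y ∈ Metric.ball p.2 (rr p) | |h y| < ε} ∩ {y : ℝ | (a,b) ∈ Metric.ball p.1 (rr p)}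
    with hT
  have hcov : A ⊆ ⋃ p ∈ t, T p := by
    intro x hx
    have hxK : (((a,b),x) : (ℝ × ℝ) × ℝ) ∈ K :=
      mem_prod.mpr ⟨hab, ⟨hx.1.1, hx.1.2.le⟩⟩
    have h2 := htcov hxK
    rw [mem_iUnion₂] at h2
    obtain ⟨p, hp, hmem⟩ := h2
    rw [mem_prod] at hmem
    exact mem_iUnion₂.mpr ⟨p, hp, ⟨⟨hmem.2, hx.2⟩, hmem.1⟩⟩
  set Bd : ENNReal := ENNReal.ofReal ((3:ℝ)^k₀ * (ε/δ₀) ^ (1/(k₀:ℝ))) with hBd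
  have hTbound : ∀ p ∈ t, volume (T p) ≤ Bd := by
    intro p hp
    by_cases hmem : ((a,b) : ℝ × ℝ) ∈ Metric.ball p.1 (rr p)
    · have hlow : ∀ y ∈ Metric.ball p.2 (rr p), dd p ≤ |iteratedDeriv (kk p) h y| := by
        intro y hy
        rw [hh, iter_comb f g hfan hgan a b (kk p) y]
        exact hball p (htK p hp) (a,b) hmem y hy
      have hddp : 0 < dd p := hdd p (htK p hp)
      have hdle : δ₀ ≤ dd p := Finset.inf'_le dd hp
      rcases Nat.eq_zero_or_pos (kk p) with hk0 | hk1
      · have hemp : T p = ∅ := by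
          ext y
          simp only [hT, mem_inter_iff, mem_setOf_eq, mem_empty_iff_false, iff_false, not_and]
          rintro ⟨hy1, hy2⟩ _
          have h3 := hlow y hy1
          rw [hk0, iteratedDeriv_zero] at h3
          linarith
        rw [hemp]
        simp
      · have hball_oc : (Metric.ball p.2 (rr p)).OrdConnected := by
          rw [Real.ball_eq_Ioo]; exact ordConnected_Ioo
        have hsub := sublevel_meas h hDh (kk p) hk1 (Metric.ball p.2 (rr p)) hball_oc
          (dd p) ε hddp hε hlow
        have hTsub : T p ⊆ {y ∈ Metric.ball p.2 (rr p) | |h y| < ε} := inter_subset_left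
        refine le_trans (le_trans (measure_mono hTsub) hsub) ?_
        apply ENNReal.ofReal_le_ofReal
        have hkle : kk p ≤ k₀ := le_trans (Finset.le_sup hp) (Nat.le_succ _)
        have h1 : (ε/dd p) ^ (1/((kk p):ℝ)) ≤ (ε/δ₀) ^ (1/(k₀:ℝ)) := by
          have e1 : (ε/dd p) ^ (1/((kk p):ℝ)) ≤ (ε/dd p) ^ (1/(k₀:ℝ)) := by
            apply Real.rpow_le_rpow_of_exponent_ge (div_pos hε hddp)
            · rw [div_le_one hddp]; linarith
            · apply one_div_le_one_div_of_le
              · exact_mod_cast hk1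
              · exact_mod_cast hkle
          have e2 : (ε/dd p) ^ (1/(k₀:ℝ)) ≤ (ε/δ₀) ^ (1/(k₀:ℝ)) := by
            apply Real.rpow_le_rpow (by positivity) _ (by positivity)
            exact div_le_div_of_nonneg_left hε.le hδ₀ hdle
          exact e1.trans e2
        have h2 : (3:ℝ)^(kk p) ≤ 3^k₀ := pow_le_pow_right₀ (by norm_num) hkle
        have h3 : (0:ℝ) ≤ (ε/dd p) ^ (1/((kk p):ℝ)) := by positivity
        exact mul_le_mul h2 h1 h3 (by positivity)
    · have hemp : T p = ∅ := by
        rw [eq_empty_iff_forall_notMem]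
        intro y hy
        exact hmem hy.2
      rw [hemp]
      simp
  calc volume A ≤ volume (⋃ p ∈ t, T p) := measure_mono hcov
    _ ≤ ∑ p ∈ t, volume (T p) := measure_biUnion_finset_le t T
    _ ≤ ∑ _p ∈ t, Bd := Finset.sum_le_sum hTbound
    _ = t.card • Bd := Finset.sum_const Bd
    _ = ENNReal.ofReal ((t.card : ℝ) * ((3:ℝ)^k₀ * (ε/δ₀) ^ (1/(k₀:ℝ)))) := by
        rw [hBd, nsmul_eq_mul, ← ENNReal.ofReal_natCast t.card,
          ← ENNReal.ofReal_mul (Nat.cast_nonneg _)]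
    _ < ENNReal.ofReal (ε ^ (1/(2*(k₀:ℝ)))) := by
        rw [ENNReal.ofReal_lt_ofReal_iff (Real.rpow_pos_of_pos hε _)]
        exact final_arith k₀ hk₀ δ₀ hδ₀ t.card ε hε hεsmall
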